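/- For each fixed x > 0, the Mainardi function value M_{α/2}(x) tends to (1/√π)·exp(−x²/4) as α → 1⁻. -/

import Mathlib

open Real Filter Set

/-- The Wright function `W(x,a,b)`, with the convention that `1/Gamma` vanishes at
the nonpositive integers (in Mathlib, `Real.Gamma` is `0` there, and division by
`0` is `0`). -/
noncomputable def wright (x a b : ℝ) : ℝ :=
  ∑' k : ℕ, x ^ k / (Nat.factorial k * Real.Gamma (a * k + b))

/-- The Mainardi function `M_ν(x) = W(−x, −ν, 1−ν)`. -/
noncomputable def mainardi (ν x : ℝ) : ℝ := wright (-x) (-ν) (1 - ν)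

/-- The error function `erf(x) = (2/√π) ∫₀ˣ exp(−s²) ds`. -/
noncomputable def erf (x : ℝ) : ℝ :=
  2 / Real.sqrt Real.pi * ∫ s in (0:ℝ)..x, Real.exp (-s ^ 2)

/-! ### Auxiliary lemmas -/

lemma continuous_Gamma_inv : Continuous fun s : ℝ => (Real.Gamma s)⁻¹ := by
  have h : (fun s : ℝ => (Real.Gamma s)⁻¹) =
      fun s : ℝ => ((Complex.Gamma (s : ℂ))⁻¹).re := by
    ext s
    rw [Complex.Gamma_ofReal, ← Complex.ofReal_inv, Complex.ofReal_re]
  rw [h]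
  exact Complex.continuous_re.comp
    (Complex.differentiable_one_div_Gamma.continuous.comp Complex.continuous_ofReal)

lemma abs_inv_Gamma_le {s : ℝ} (hs : s < 1) :
    |(Real.Gamma s)⁻¹| ≤ Real.Gamma (1 - s) / π := by
  have h1 : 0 < 1 - s := by linarith
  have hG : 0 < Real.Gamma (1 - s) := Real.Gamma_pos_of_pos h1
  rcases eq_or_ne (Real.sin (π * s)) 0 with h | h
  · obtain ⟨n, hn⟩ := Real.sin_eq_zero_iff.mp h
    have hsn : s = (n : ℝ) := by
      have h2 : s * π = (n : ℝ) * π := by linarith [hn]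
      exact mul_right_cancel₀ Real.pi_ne_zero h2
    have hn0 : n ≤ 0 := by
      by_contra hcon
      push_neg at hcon
      have : (1 : ℝ) ≤ (n : ℝ) := by exact_mod_cast hcon
      linarith [hsn ▸ hs]
    obtain ⟨m, hm⟩ : ∃ m : ℕ, n = -(m : ℤ) := ⟨(-n).toNat, by omega⟩
    have hΓ : Real.Gamma s = 0 := by
      rw [hsn, hm]
      push_cast
      exact Real.Gamma_neg_nat_eq_zero m
    rw [hΓ, inv_zero, abs_zero]
    positivity
  · have hid := Real.Gamma_mul_Gamma_one_sub s
    have hΓs : Real.Gamma s ≠ 0 := by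
      intro h0
      rw [h0, zero_mul, eq_comm, div_eq_zero_iff] at hid
      rcases hid with h' | h'
      · exact Real.pi_ne_zero h'
      · exact h h'
    have h2 : Real.Gamma s * (Real.Gamma (1 - s) * Real.sin (π * s)) = π := by
      rw [← mul_assoc, hid, div_mul_cancel₀ _ h]
    have hinv : (Real.Gamma s)⁻¹ = Real.Gamma (1 - s) * Real.sin (π * s) / π := by
      field_simp
      rw [mul_comm s π]
      linarith [h2]
    rw [hinv, abs_div, abs_mul, abs_of_pos Real.pi_pos, abs_of_pos hG]
    gcongr
    calc Real.Gamma (1 - s) * |Real.sin (π * s)| ≤ Real.Gamma (1 - s) * 1 := by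
          gcongr
          exact Real.abs_sin_le_one _
      _ = Real.Gamma (1 - s) := mul_one _

lemma Gamma_le_max {t m : ℝ} (h1 : 1/4 ≤ t) (h2 : t ≤ m) :
    Real.Gamma t ≤ max (Real.Gamma (1/4)) (Real.Gamma m) := by
  have hm : (0:ℝ) < m := by linarith
  have hseg : t ∈ segment ℝ (1/4 : ℝ) m := by
    rw [segment_eq_Icc (by linarith)]
    exact ⟨h1, h2⟩
  exact Real.convexOn_Gamma.le_on_segment (by norm_num : (1/4:ℝ) ∈ Ioi 0)
    (mem_Ioi.mpr hm) hseg

lemma Gamma_dup (k : ℕ) :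
    Real.Gamma (((k:ℝ)+1)/2) * Real.Gamma ((k:ℝ)/2 + 1)
      = (Nat.factorial k : ℝ) * (1/2)^k * Real.sqrt π := by
  have h := Real.Gamma_mul_Gamma_add_half (((k:ℝ)+1)/2)
  have e1 : ((k:ℝ)+1)/2 + 1/2 = (k:ℝ)/2 + 1 := by ring
  have e2 : 2 * (((k:ℝ)+1)/2) = (k:ℝ) + 1 := by ring
  rw [e1, e2] at h
  rw [h, Real.Gamma_nat_eq_factorial]
  have e3 : (1:ℝ) - ((k:ℝ)+1) = -(k:ℝ) := by ring
  rw [e3, Real.rpow_neg (by norm_num : (0:ℝ) ≤ 2), Real.rpow_natCast]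
  rw [one_div, inv_pow]

lemma factorial_le_two_Gamma (k : ℕ) :
    ((k/2).factorial : ℝ) ≤ 2 * Real.Gamma ((k:ℝ)/2 + 1) := by
  have hsqrt : (1:ℝ) ≤ Real.sqrt π := by
    rw [show (1:ℝ) = Real.sqrt 1 from (Real.sqrt_one).symm]
    exact Real.sqrt_le_sqrt (by linarith [Real.pi_gt_three])
  rcases Nat.even_or_odd k with ⟨m, hm⟩ | ⟨m, hm⟩
  · subst hm
    have h1 : (m + m)/2 = m := by omega
    have h2 : ((m+m : ℕ):ℝ)/2 + 1 = (m:ℝ) + 1 := by push_cast; ring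
    rw [h1, h2, Real.Gamma_nat_eq_factorial]
    nlinarith [Nat.factorial_pos m, (by exact_mod_cast Nat.factorial_pos m : (0:ℝ) < m.factorial)]
  · subst hm
    have h1 : (2*m + 1)/2 = m := by omega
    have h2 : ((2*m+1 : ℕ):ℝ)/2 + 1 = (m:ℝ) + 3/2 := by push_cast; ring
    rw [h1, h2]
    rcases Nat.eq_zero_or_pos m with rfl | hm1
    · simp only [Nat.factorial_zero, Nat.cast_one, Nat.cast_zero, zero_add]
      have : Real.Gamma (3/2 : ℝ) = Real.sqrt π / 2 := by
        have := Real.Gamma_add_one (s := (1/2:ℝ)) (by norm_num)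
        rw [show (3/2:ℝ) = 1/2 + 1 by norm_num, this, Real.Gamma_one_half_eq]
        ring
      rw [this]; linarith
    · have hmon := Real.Gamma_strictMonoOn_Ici.monotoneOn
      have hle : Real.Gamma ((m:ℝ) + 1) ≤ Real.Gamma ((m:ℝ) + 3/2) := by
        have hm1' : (1:ℝ) ≤ (m:ℝ) := by exact_mod_cast hm1
        exact hmon (by simp only [mem_Ici]; linarith) (by simp only [mem_Ici]; linarith)
          (by linarith)
      rw [Real.Gamma_nat_eq_factorial] at hle
      have hpos : (0:ℝ) < m.factorial := by exact_mod_cast Nat.factorial_pos m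
      linarith

lemma Gamma_half_sub (m : ℕ) :
    Real.Gamma (1/2 - (m:ℝ)) =
      Real.sqrt π * (-4 : ℝ)^m * (m.factorial : ℝ) / ((2*m).factorial : ℝ) := by
  induction m with
  | zero =>
      rw [show (1/2 - ((0:ℕ):ℝ)) = 1/2 by norm_num, Real.Gamma_one_half_eq]
      simp
  | succ m ih =>
      have hms : (1/2 : ℝ) - (m+1 : ℕ) ≠ 0 := by
        push_cast
        intro hcon
        have : (0:ℝ) ≤ (m:ℝ) := Nat.cast_nonneg m
        linarith
      have key := Real.Gamma_add_one hms
      have e1 : (1/2 : ℝ) - ((m+1 : ℕ):ℝ) + 1 = 1/2 - (m:ℝ) := by push_cast; ring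
      rw [e1] at key
      have hne : ((1/2 : ℝ) - ((m+1 : ℕ):ℝ)) ≠ 0 := hms
      have hstep : Real.Gamma (1/2 - ((m+1:ℕ):ℝ)) = Real.Gamma (1/2 - (m:ℝ)) / (1/2 - ((m+1:ℕ):ℝ)) := by
        rw [eq_div_iff hms, key]; ring
      have hf1 : ((2*(m+1)).factorial : ℝ) = (2*m+2) * ((2*m+1) * ((2*m).factorial : ℝ)) := by
        have : 2*(m+1) = (2*m+1) + 1 := by ring
        rw [this]
        push_cast [Nat.factorial_succ]
        ring
      have hf2 : (((m+1):ℕ).factorial : ℝ) = (m+1) * (m.factorial : ℝ) := by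
        push_cast [Nat.factorial_succ]; ring
      have h2m : ((2*m).factorial : ℝ) ≠ 0 := by exact_mod_cast (Nat.factorial_pos _).ne'
      have hmf : (m.factorial : ℝ) ≠ 0 := by exact_mod_cast (Nat.factorial_pos _).ne'
      have hden1 : ((2*m).factorial : ℝ) * (1/2 - ((m+1:ℕ):ℝ)) ≠ 0 := mul_ne_zero h2m hms
      have hden2 : ((2*(m:ℝ)+2) * ((2*(m:ℝ)+1) * ((2*m).factorial : ℝ))) ≠ 0 := by positivity
      rw [hstep, ih, hf1, hf2, div_div, div_eq_div_iff hden1 hden2]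
      push_cast
      ring

lemma exp_tsum (y : ℝ) : Real.exp y = ∑' n : ℕ, y^n / (n.factorial : ℝ) := by
  rw [Real.exp_eq_exp_ℝ, NormedSpace.exp_eq_tsum_div]

theorem mainardi_tendsto_gaussian (x : ℝ) (hx : 0 < x) :
    Tendsto (fun α : ℝ => mainardi (α / 2) x)
      (nhdsWithin 1 (Set.Ioo 0 1))
      (nhds (1 / Real.sqrt Real.pi * Real.exp (-x ^ 2 / 4))) := by
  have hπ := Real.pi_pos
  have hsπ : (0:ℝ) < Real.sqrt π := Real.sqrt_pos.mpr hπ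
  set f : ℝ → ℕ → ℝ := fun α k =>
    (-x) ^ k / ((Nat.factorial k : ℝ) * Real.Gamma (-(α/2) * (k:ℝ) + (1 - α/2))) with hf
  set B : ℕ → ℝ := fun k =>
    Real.Gamma (1/4) / π * (x^k / (k.factorial : ℝ))
      + (2 * Real.sqrt π / π) * ((x/2)^k / ((k/2).factorial : ℝ)) with hBdef
  -- summability of the bound
  have hB : Summable B := by
    apply Summable.add
    · exact (Real.summable_pow_div_factorial x).mul_left _
    · apply Summable.mul_left
      apply Summable.even_add_odd
      · have he : (fun m => (x/2)^(2*m) / (((2*m)/2).factorial : ℝ))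
            = fun m => ((x/2)^2)^m / (m.factorial : ℝ) := by
          funext m
          rw [pow_mul, Nat.mul_div_cancel_left m (by norm_num)]
        rw [he]
        exact Real.summable_pow_div_factorial _
      · have ho : (fun m => (x/2)^(2*m+1) / (((2*m+1)/2).factorial : ℝ))
            = fun m => (x/2) * (((x/2)^2)^m / (m.factorial : ℝ)) := by
          funext m
          have : (2*m+1)/2 = m := by omega
          rw [this, pow_succ, pow_mul]
          ring
        rw [ho]
        exact (Real.summable_pow_div_factorial _).mul_left _
  -- pointwise limits
  have hlim : ∀ k : ℕ, Tendsto (fun α => f α k) (nhdsWithin 1 (Set.Ioo 0 1)) (nhds (f 1 k)) := by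
    intro k
    have hc : Continuous fun α : ℝ => f α k := by
      have hrw : (fun α : ℝ => f α k)
          = fun α : ℝ => ((-x)^k * ((Nat.factorial k : ℝ))⁻¹)
              * (Real.Gamma (-(α/2) * (k:ℝ) + (1 - α/2)))⁻¹ := by
        funext α
        simp only [hf]
        rw [div_eq_mul_inv, mul_inv]
        ring
      rw [hrw]
      exact continuous_const.mul (continuous_Gamma_inv.comp (by continuity))
    exact (hc.tendsto 1).mono_left nhdsWithin_le_nhds
  -- the uniform bound
  have hbound : ∀ᶠ α in nhdsWithin 1 (Set.Ioo 0 1), ∀ k, ‖f α k‖ ≤ B k := by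
    have hmem : Ioi (1/2 : ℝ) ∈ nhdsWithin 1 (Set.Ioo 0 1) :=
      nhdsWithin_le_nhds (isOpen_Ioi.mem_nhds (by norm_num))
    filter_upwards [hmem, self_mem_nhdsWithin] with α hα1 hα2
    intro k
    obtain ⟨hα0, hαlt⟩ := hα2
    rw [mem_Ioi] at hα1
    have hk0 : (0:ℝ) ≤ (k:ℝ) := Nat.cast_nonneg k
    set t : ℝ := α * ((k:ℝ)+1) / 2 with ht
    have harg : -(α/2) * (k:ℝ) + (1 - α/2) = 1 - t := by rw [ht]; ring
    have ht1 : 1/4 ≤ t := by rw [ht]; nlinarith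
    have ht2 : t ≤ ((k:ℝ)+1)/2 := by rw [ht]; nlinarith
    have hs : 1 - t < 1 := by linarith
    have hkfac : (0:ℝ) < (Nat.factorial k : ℝ) := by exact_mod_cast Nat.factorial_pos k
    have hqfac : (0:ℝ) < ((k/2).factorial : ℝ) := by exact_mod_cast Nat.factorial_pos (k/2)
    have hΓq : (0:ℝ) < Real.Gamma ((k:ℝ)/2 + 1) := Real.Gamma_pos_of_pos (by positivity)
    have hΓ14 : (0:ℝ) < Real.Gamma (1/4) := Real.Gamma_pos_of_pos (by norm_num)
    have hΓk : (0:ℝ) < Real.Gamma (((k:ℝ)+1)/2) := Real.Gamma_pos_of_pos (by positivity)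
    have habs : ‖f α k‖ = x^k * ((Nat.factorial k : ℝ))⁻¹ * |(Real.Gamma (1 - t))⁻¹| := by
      simp only [hf, harg]
      rw [Real.norm_eq_abs, div_eq_mul_inv, mul_inv, ← mul_assoc, abs_mul, abs_mul, abs_pow,
        abs_neg, abs_of_pos hx, abs_of_nonneg (by positivity : (0:ℝ) ≤ ((Nat.factorial k : ℝ))⁻¹)]
    rw [habs]
    have step1 : x^k * ((Nat.factorial k : ℝ))⁻¹ * |(Real.Gamma (1 - t))⁻¹|
        ≤ x^k * ((Nat.factorial k : ℝ))⁻¹ * (Real.Gamma t / π) := by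
      have := abs_inv_Gamma_le hs
      rw [show (1 : ℝ) - (1 - t) = t by ring] at this
      gcongr
    have step2 : Real.Gamma t ≤ Real.Gamma (1/4) + Real.Gamma (((k:ℝ)+1)/2) := by
      refine (Gamma_le_max ht1 ht2).trans ?_
      exact max_le (by linarith) (by linarith)
    have step3 : x^k * ((Nat.factorial k : ℝ))⁻¹ * (Real.Gamma t / π)
        ≤ x^k * ((Nat.factorial k : ℝ))⁻¹
            * ((Real.Gamma (1/4) + Real.Gamma (((k:ℝ)+1)/2)) / π) := by
      gcongr
    have hdup := Gamma_dup k
    have hG : Real.Gamma (((k:ℝ)+1)/2)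
        = (Nat.factorial k : ℝ) * (1/2)^k * Real.sqrt π / Real.Gamma ((k:ℝ)/2+1) :=
      (eq_div_iff hΓq.ne').mpr hdup
    have h2 := factorial_le_two_Gamma k
    have hx2 : (x/2)^k = x^k * (1/2)^k := by
      rw [div_pow, one_div, inv_pow, mul_comm, inv_mul_eq_div]
    have piece : x^k * ((Nat.factorial k : ℝ))⁻¹ * (Real.Gamma (((k:ℝ)+1)/2) / π)
        ≤ (2 * Real.sqrt π / π) * ((x/2)^k / ((k/2).factorial : ℝ)) := by
      rw [hG, hx2]
      rw [show x^k * ((Nat.factorial k : ℝ))⁻¹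
            * ((Nat.factorial k : ℝ) * (1/2)^k * Real.sqrt π / Real.Gamma ((k:ℝ)/2+1) / π)
          = (x^k * (1/2)^k * Real.sqrt π * (Nat.factorial k * (Nat.factorial k : ℝ)⁻¹))
              / (Real.Gamma ((k:ℝ)/2+1) * π) by ring,
        mul_inv_cancel₀ hkfac.ne', mul_one]
      rw [show 2 * Real.sqrt π / π * (x^k * (1/2)^k / ((k/2).factorial : ℝ))
            = (2 * Real.sqrt π * (x^k * (1/2)^k)) / (π * ((k/2).factorial : ℝ)) by ring]
      rw [div_le_div_iff₀ (by positivity) (by positivity)]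
      calc x^k * (1/2)^k * Real.sqrt π * (π * ((k/2).factorial : ℝ))
          = (x^k * (1/2)^k * Real.sqrt π * π) * ((k/2).factorial : ℝ) := by ring
        _ ≤ (x^k * (1/2)^k * Real.sqrt π * π) * (2 * Real.Gamma ((k:ℝ)/2+1)) := by
            exact mul_le_mul_of_nonneg_left h2 (by positivity)
        _ = 2 * Real.sqrt π * (x^k * (1/2)^k) * (Real.Gamma ((k:ℝ)/2+1) * π) := by ring
    calc x^k * ((Nat.factorial k : ℝ))⁻¹ * |(Real.Gamma (1 - t))⁻¹|
        ≤ x^k * ((Nat.factorial k : ℝ))⁻¹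
            * ((Real.Gamma (1/4) + Real.Gamma (((k:ℝ)+1)/2)) / π) := step1.trans step3
      _ = Real.Gamma (1/4) / π * (x^k / (Nat.factorial k : ℝ))
            + x^k * ((Nat.factorial k : ℝ))⁻¹ * (Real.Gamma (((k:ℝ)+1)/2) / π) := by ring
      _ ≤ Real.Gamma (1/4) / π * (x^k / (Nat.factorial k : ℝ))
            + (2 * Real.sqrt π / π) * ((x/2)^k / ((k/2).factorial : ℝ)) := by
          gcongr
      _ = B k := rfl
  -- the main convergence statement
  have hmain := tendsto_tsum_of_dominated_convergence hB hlim hbound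
  -- identify the limit
  have heven : ∀ m : ℕ, f 1 (2*m) = 1 / Real.sqrt π * ((-x^2/4)^m / (m.factorial : ℝ)) := by
    intro m
    have harg : -((1:ℝ)/2) * ((2*m : ℕ):ℝ) + (1 - 1/2) = 1/2 - (m:ℝ) := by
      push_cast; ring
    simp only [hf, harg, Gamma_half_sub m]
    have h2m : ((2*m).factorial : ℝ) ≠ 0 := by exact_mod_cast (Nat.factorial_pos _).ne'
    have hmf : (m.factorial : ℝ) ≠ 0 := by exact_mod_cast (Nat.factorial_pos _).ne'
    have hneg : (-x)^(2*m) = (x^2)^m := by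
      rw [pow_mul]; congr 1; ring
    rw [hneg]
    have h4 : ((-4:ℝ))^m ≠ 0 := by positivity
    have h4m : ((-4:ℝ))^m * (-1)^m = 4^m := by
      rw [← mul_pow]; norm_num
    field_simp
    have h4q : ((-4:ℝ))^m * (-1/4)^m = 1 := by rw [← mul_pow]; norm_num
    linear_combination (-x ^ (m * 2)) * h4q
  have hodd : ∀ m : ℕ, f 1 (2*m+1) = 0 := by
    intro m
    have harg : -((1:ℝ)/2) * ((2*m+1 : ℕ):ℝ) + (1 - 1/2) = -(m:ℝ) := by
      push_cast; ring
    simp only [hf, harg, Real.Gamma_neg_nat_eq_zero, mul_zero, div_zero]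
  have hSe : Summable (fun m => f 1 (2*m)) := by
    rw [funext heven]
    exact ((Real.summable_pow_div_factorial _).mul_left _)
  have hSo : Summable (fun m => f 1 (2*m+1)) := by
    rw [funext hodd]
    exact summable_zero
  have hfinal : (∑' k, f 1 k) = 1 / Real.sqrt π * Real.exp (-x^2/4) := by
    rw [← tsum_even_add_odd hSe hSo, funext heven, funext hodd, tsum_zero, add_zero,
      tsum_mul_left, exp_tsum]
  have hgoal : (fun α : ℝ => mainardi (α / 2) x) = fun α => ∑' k, f α k := by
    funext α
    simp only [mainardi, wright, hf]
  rw [hgoal, ← hfinal]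
  exact hmain
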